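/- For every integer K ≥ 3, all real κ_1,…,κ_K and every nonzero complex z, the coefficient of λ^1 in det(λI − M(z)) equals c_1 = K·Σ_{j=1}^K ∏_{i≠j} κ_i. In particular, when all κ_i > 0 this equals K² κ_g^K / κ, where κ_g = (∏_{i=1}^K κ_i)^{1/K} is the geometric mean and κ = K(Σ_{i=1}^K 1/κ_i)^{−1} is the harmonic mean of the diffusivities. -/

import Mathlib

/-- The `K × K` complex matrix `M(z)` of the periodic lattice diffusion operator:
rows/columns are indexed by `Fin K` (0-based, representing indices `1,…,K`);
`M_{i,i} = −(κ_{i−1} + κ_i)`, `M_{i,i+1} = M_{i+1,i} = κ_i`,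
`M_{1,K} = κ_K z^{−K}`, `M_{K,1} = κ_K z^{K}`, all other entries `0`. -/
noncomputable def diffMatrix (K : ℕ) (κ : ℕ → ℝ) (z : ℂ) :
    Matrix (Fin K) (Fin K) ℂ :=
  Matrix.of fun i j =>
    if i.val = j.val then -((κ i.val : ℂ) + (κ (i.val + 1) : ℂ))
    else if i.val + 1 = j.val then (κ (i.val + 1) : ℂ)
    else if j.val + 1 = i.val then (κ (j.val + 1) : ℂ)
    else if i.val = 0 ∧ j.val = K - 1 then (κ K : ℂ) * z⁻¹ ^ K
    else if i.val = K - 1 ∧ j.val = 0 then (κ K : ℂ) * z ^ K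
    else 0


open Matrix Finset Polynomial Filter Topology

section Aux

variable {R : Type*} [CommRing R] {n : Type*} [DecidableEq n] [Fintype n]

theorem derivative_finset_prod' {ι : Type*} [DecidableEq ι] (s : Finset ι) (f : ι → R[X]) :
    derivative (∏ b ∈ s, f b) = ∑ b ∈ s, (∏ a ∈ s.erase b, f a) * derivative (f b) := by
  classical
  induction s using Finset.induction_on with
  | empty => simp
  | @insert a s ha ih =>
    rw [Finset.prod_insert ha, derivative_mul, ih, Finset.sum_insert ha,
      Finset.erase_insert ha, Finset.mul_sum, mul_comm (derivative (f a))]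
    congr 1
    refine Finset.sum_congr rfl fun b hb => ?_
    have hab : a ≠ b := fun h => ha (h ▸ hb)
    rw [Finset.erase_insert_of_ne hab,
      Finset.prod_insert (fun h => ha (Finset.erase_subset _ _ h)), mul_assoc]

theorem coeff_one_charpoly (A : Matrix n n R) :
    A.charpoly.coeff 1 = Matrix.trace (Matrix.adjugate (-A)) := by
  have key : ∀ p : R[X], p.coeff 1 = (derivative p).eval 0 := by
    intro p
    rw [← coeff_zero_eq_eval_zero, coeff_derivative]
    push_cast; ring
  have heval : ∀ i j : n, (charmatrix A i j).eval 0 = (-A) i j := by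
    intro i j
    rcases eq_or_ne i j with rfl | h
    · simp [charmatrix_apply_eq]
    · simp [charmatrix_apply_ne _ _ _ h, one_apply_ne h]
  have hder : ∀ i j : n, ((derivative (charmatrix A i j)).eval 0) = if i = j then 1 else 0 := by
    intro i j
    rcases eq_or_ne i j with rfl | h
    · simp [charmatrix_apply_eq]
    · simp [charmatrix_apply_ne _ _ _ h, h]
  calc A.charpoly.coeff 1
      = ∑ σ : Equiv.Perm n, ∑ i : n, if σ i = i then
          Equiv.Perm.sign σ • ∏ j ∈ univ.erase i, (-A) (σ j) j else 0 := by
        rw [Matrix.charpoly, Matrix.det_apply, finset_sum_coeff]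
        refine Finset.sum_congr rfl fun σ _ => ?_
        rw [coeff_smul, key, derivative_finset_prod', eval_finset_sum, smul_sum]
        refine Finset.sum_congr rfl fun i _ => ?_
        rw [eval_mul, eval_prod, hder]
        simp only [heval]
        split_ifs with h
        · rw [mul_one]
        · rw [mul_zero, smul_zero]
    _ = ∑ i : n, ∑ σ : Equiv.Perm n, if σ i = i then
          Equiv.Perm.sign σ • ∏ j ∈ univ.erase i, (-A) (σ j) j else 0 := Finset.sum_comm
    _ = Matrix.trace (Matrix.adjugate (-A)) := by
        rw [Matrix.trace]
        refine Finset.sum_congr rfl fun i _ => ?_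
        rw [Matrix.diag_apply, Matrix.adjugate_apply, Matrix.det_apply]
        refine (Finset.sum_congr rfl fun σ _ => ?_).symm
        rcases eq_or_ne (σ i) i with hfix | hfix
        · rw [if_pos hfix]
          rw [← Finset.mul_prod_erase _ _ (mem_univ i)]
          rw [hfix, Matrix.updateRow_self, Pi.single_eq_same, one_mul]
          congr 1
          refine Finset.prod_congr rfl fun j hj => ?_
          rw [Matrix.updateRow_ne]
          intro hc
          exact (Finset.mem_erase.mp hj).1 (σ.injective (hc.trans hfix.symm))
        · rw [if_neg hfix]
          have key0 : (-A).updateRow i (Pi.single i 1) (σ (σ⁻¹ i)) (σ⁻¹ i) = 0 := by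
            rw [Equiv.Perm.inv_def, Equiv.apply_symm_apply, Matrix.updateRow_self, Pi.single_eq_of_ne]
            intro hc
            apply hfix
            have h2 := congrArg σ hc
            rw [Equiv.apply_symm_apply] at h2
            exact h2.symm
          rw [Finset.prod_eq_zero (f := fun j => (-A).updateRow i (Pi.single i 1) (σ j) j)
            (Finset.mem_univ (σ⁻¹ i)) key0, smul_zero]

end Aux

noncomputable def Tm (K : ℕ) (w : ℂ) : Matrix (Fin K) (Fin K) ℂ :=
  Matrix.of fun i j => if (i : ℕ) + 1 = (j : ℕ) then 1
    else if (i : ℕ) = K - 1 ∧ (j : ℕ) = 0 then w else 0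

noncomputable def Um (K : ℕ) (w : ℂ) : Matrix (Fin K) (Fin K) ℂ :=
  Matrix.of fun i j => if (i : ℕ) ≤ (j : ℕ) then 1 else w

theorem TU (K : ℕ) (hK : 2 ≤ K) (w : ℂ) :
    (1 - Tm K w) * Um K w = (1 - w) • (1 : Matrix (Fin K) (Fin K) ℂ) := by
  ext i j
  have hi' := i.isLt
  have hj' := j.isLt
  rw [Matrix.sub_mul, Matrix.one_mul, Matrix.sub_apply, Matrix.mul_apply]
  by_cases hi : (i : ℕ) = K - 1
  · have h0 : 0 < K := by omega
    rw [Finset.sum_eq_single_of_mem (⟨0, h0⟩ : Fin K) (Finset.mem_univ _) (by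
      intro b _ hb
      have hb' := b.isLt
      have hbv : (b : ℕ) ≠ 0 := fun h => hb (Fin.ext h)
      simp only [Tm, of_apply]
      split_ifs <;> first | rfl | omega | ring1 | (exact (‹False›).elim) | (exact (And.right ‹_ ∧ False›).elim) | (exact absurd trivial ‹¬True›) | (exact ((‹¬(_ ∧ True)›) ⟨by omega, trivial⟩).elim))]
    have h1 : Tm K w i ⟨0, h0⟩ * Um K w ⟨0, h0⟩ j = w := by
      simp only [Tm, Um, of_apply]
      split_ifs <;> first | rfl | omega | ring1 | (exact (‹False›).elim) | (exact (And.right ‹_ ∧ False›).elim) | (exact absurd trivial ‹¬True›) | (exact ((‹¬(_ ∧ True)›) ⟨by omega, trivial⟩).elim)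
    rw [h1]
    simp only [Um, of_apply, Matrix.smul_apply, Matrix.one_apply, Fin.ext_iff, smul_eq_mul]
    split_ifs <;> first | rfl | omega | ring1 | (exact (‹False›).elim) | (exact (And.right ‹_ ∧ False›).elim) | (exact absurd trivial ‹¬True›) | (exact ((‹¬(_ ∧ True)›) ⟨by omega, trivial⟩).elim)
  · have hlt : (i : ℕ) + 1 < K := by omega
    rw [Finset.sum_eq_single_of_mem (⟨(i : ℕ) + 1, hlt⟩ : Fin K) (Finset.mem_univ _) (by
      intro b _ hb
      have hb' := b.isLt
      have hbv : (b : ℕ) ≠ (i : ℕ) + 1 := fun h => hb (Fin.ext h)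
      simp only [Tm, of_apply]
      split_ifs <;> first | rfl | omega | ring1 | (exact (‹False›).elim) | (exact (And.right ‹_ ∧ False›).elim) | (exact absurd trivial ‹¬True›) | (exact ((‹¬(_ ∧ True)›) ⟨by omega, trivial⟩).elim))]
    have h1 : Tm K w i ⟨(i : ℕ) + 1, hlt⟩ * Um K w ⟨(i : ℕ) + 1, hlt⟩ j
        = Um K w ⟨(i : ℕ) + 1, hlt⟩ j := by
      simp only [Tm, of_apply]
      split_ifs <;> first | rfl | omega | ring1 | (exact (‹False›).elim) | (exact (And.right ‹_ ∧ False›).elim) | (exact absurd trivial ‹¬True›) | (exact ((‹¬(_ ∧ True)›) ⟨by omega, trivial⟩).elim)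
    rw [h1]
    simp only [Um, of_apply, Matrix.smul_apply, Matrix.one_apply, Fin.ext_iff, smul_eq_mul]
    split_ifs <;> first | rfl | omega | ring1 | (exact (‹False›).elim) | (exact (And.right ‹_ ∧ False›).elim) | (exact absurd trivial ‹¬True›) | (exact ((‹¬(_ ∧ True)›) ⟨by omega, trivial⟩).elim)

theorem detT (K : ℕ) (hK : 2 ≤ K) (w : ℂ) : (1 - Tm K w).det = 1 - w := by
  obtain ⟨n, rfl⟩ : ∃ n, K = n + 1 := ⟨K - 1, by omega⟩
  have hn : 1 ≤ n := by omega
  rw [Matrix.det_succ_column_zero]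
  have hzero : ∀ i : Fin (n + 1), i ≠ 0 → i ≠ Fin.last n →
      (-1 : ℂ) ^ (i : ℕ) * (1 - Tm (n+1) w) i 0 *
        ((1 - Tm (n+1) w).submatrix i.succAbove Fin.succ).det = 0 := by
    intro i h0 hl
    have hi' := i.isLt
    have hv0 : (i : ℕ) ≠ 0 := fun h => h0 (Fin.ext h)
    have hvl : (i : ℕ) ≠ n := fun h => hl (Fin.ext h)
    have : (1 - Tm (n+1) w) i 0 = 0 := by
      simp only [Matrix.sub_apply, Matrix.one_apply, Tm, of_apply, Fin.ext_iff, Fin.val_zero]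
      split_ifs <;> first | rfl | omega | ring1 | (exact (‹False›).elim) | (exact (And.right ‹_ ∧ False›).elim) | (exact absurd trivial ‹¬True›) | (exact ((‹¬(_ ∧ True)›) ⟨by omega, trivial⟩).elim)
    rw [this, mul_zero, zero_mul]
  rw [← Finset.sum_subset (Finset.subset_univ {(0 : Fin (n+1)), Fin.last n})
    (fun x _ hx => hzero x (fun h => hx (by simp [h])) (fun h => hx (by simp [h])))]
  have hne : (0 : Fin (n+1)) ≠ Fin.last n :=
    Fin.ne_of_val_ne (by simp only [Fin.val_zero, Fin.val_last]; omega)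
  rw [Finset.sum_pair hne]
  have e00 : (1 - Tm (n+1) w) 0 0 = 1 := by
    simp only [Matrix.sub_apply, Matrix.one_apply, Tm, of_apply, Fin.val_zero]
    split_ifs <;> first | rfl | omega | ring1 | (exact (‹False›).elim) | (exact (And.right ‹_ ∧ False›).elim) | (exact absurd trivial ‹¬True›) | (exact ((‹¬(_ ∧ True)›) ⟨by omega, trivial⟩).elim)
  have el0 : (1 - Tm (n+1) w) (Fin.last n) 0 = -w := by
    simp only [Matrix.sub_apply, Matrix.one_apply, Tm, of_apply, Fin.ext_iff, Fin.val_zero,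
      Fin.val_last]
    split_ifs <;> first | rfl | omega | ring1 | (exact (‹False›).elim) | (exact (And.right ‹_ ∧ False›).elim) | (exact absurd trivial ‹¬True›) | (exact ((‹¬(_ ∧ True)›) ⟨by omega, trivial⟩).elim)
  have d00 : ((1 - Tm (n+1) w).submatrix (Fin.succAbove 0) Fin.succ).det = 1 := by
    rw [Matrix.det_of_upperTriangular]
    · apply Finset.prod_eq_one
      intro i _
      simp only [Matrix.submatrix_apply, Fin.succAbove_zero, Matrix.sub_apply,
        Matrix.one_apply, Tm, of_apply, Fin.val_succ]
      have := i.isLt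
      split_ifs <;> first | rfl | omega | ring1 | (exact (‹False›).elim) | (exact (And.right ‹_ ∧ False›).elim) | (exact absurd trivial ‹¬True›) | (exact ((‹¬(_ ∧ True)›) ⟨by omega, trivial⟩).elim)
    · intro i j hij
      have hij' : (j : ℕ) < (i : ℕ) := hij
      simp only [Matrix.submatrix_apply, Fin.succAbove_zero, Matrix.sub_apply,
        Matrix.one_apply, Tm, of_apply, Fin.ext_iff, Fin.val_succ]
      split_ifs <;> first | rfl | omega | ring1 | (exact (‹False›).elim) | (exact (And.right ‹_ ∧ False›).elim) | (exact absurd trivial ‹¬True›) | (exact ((‹¬(_ ∧ True)›) ⟨by omega, trivial⟩).elim)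
  have dl0 : ((1 - Tm (n+1) w).submatrix (Fin.last n).succAbove Fin.succ).det = (-1 : ℂ) ^ n := by
    rw [Matrix.det_of_lowerTriangular]
    · rw [Finset.prod_congr rfl (g := fun _ => (-1 : ℂ)) (fun i _ => ?_), Finset.prod_const]
      · simp [Finset.card_univ]
      · simp only [Matrix.submatrix_apply, Fin.succAbove_last, Matrix.sub_apply,
          Matrix.one_apply, Tm, of_apply, Fin.ext_iff, Fin.coe_castSucc, Fin.val_succ]
        have := i.isLt
        split_ifs <;> first | rfl | omega | ring1 | (exact (‹False›).elim) | (exact (And.right ‹_ ∧ False›).elim) | (exact absurd trivial ‹¬True›) | (exact ((‹¬(_ ∧ True)›) ⟨by omega, trivial⟩).elim)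
    · intro i j hij
      have hij' : (i : ℕ) < (j : ℕ) := hij
      simp only [Matrix.submatrix_apply, Fin.succAbove_last, Matrix.sub_apply,
        Matrix.one_apply, Tm, of_apply, Fin.ext_iff, Fin.coe_castSucc, Fin.val_succ]
      split_ifs <;> first | rfl | omega | ring1 | (exact (‹False›).elim) | (exact (And.right ‹_ ∧ False›).elim) | (exact absurd trivial ‹¬True›) | (exact ((‹¬(_ ∧ True)›) ⟨by omega, trivial⟩).elim)
  rw [e00, el0, d00, dl0]
  simp only [Fin.val_zero, pow_zero, Fin.val_last]
  have h1 : (-1 : ℂ) ^ n * -w * (-1 : ℂ) ^ n = -w := by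
    rw [mul_comm ((-1 : ℂ) ^ n) (-w), mul_assoc, ← pow_add, ← two_mul, pow_mul]
    norm_num
  rw [one_mul, mul_one, h1]
  ring

theorem adjT (K : ℕ) (hK : 2 ≤ K) (w : ℂ) :
    (1 - Tm K w).adjugate = Um K w := by
  have hgood : ∀ v : ℂ, v ≠ 1 → (1 - Tm K v).adjugate = Um K v := by
    intro v hv
    have hv1 : (1 : ℂ) - v ≠ 0 := sub_ne_zero.mpr (Ne.symm hv)
    have h1 : (1 - Tm K v) * ((1 - v)⁻¹ • Um K v) = 1 := by
      rw [Matrix.mul_smul, TU K hK v, smul_smul, inv_mul_cancel₀ hv1, one_smul]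
    have hinv : (1 - Tm K v)⁻¹ = (1 - v)⁻¹ • Um K v := Matrix.inv_eq_right_inv h1
    have h2 := Matrix.inv_def (1 - Tm K v)
    rw [hinv, detT K hK v, Ring.inverse_eq_inv] at h2
    have := congrArg (fun M => ((1 : ℂ) - v) • M) h2
    simpa [smul_smul, mul_inv_cancel₀ hv1] using this.symm
  rcases ne_or_eq w 1 with hw | rfl
  · exact hgood w hw
  · have hTcont : Continuous fun v : ℂ => (1 : Matrix (Fin K) (Fin K) ℂ) - Tm K v := by
      apply Continuous.sub continuous_const
      apply continuous_matrix
      intro i j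
      simp only [Tm, of_apply]
      split_ifs
      · exact continuous_const
      · exact continuous_id
      · exact continuous_const
    have hF : Continuous fun v : ℂ => (1 - Tm K v).adjugate := hTcont.matrix_adjugate
    have hG : Continuous fun v : ℂ => Um K v := by
      apply continuous_matrix
      intro i j
      simp only [Um, of_apply]
      split_ifs
      · exact continuous_const
      · exact continuous_id
    have h1 : Tendsto (fun v : ℂ => (1 - Tm K v).adjugate) (𝓝[≠] 1)
        (𝓝 ((1 - Tm K 1).adjugate)) :=
      (hF.continuousAt).continuousWithinAt.tendsto
    have h2 : Tendsto (fun v : ℂ => (1 - Tm K v).adjugate) (𝓝[≠] 1) (𝓝 (Um K 1)) := by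
      refine Tendsto.congr' ?_ ((hG.continuousAt).continuousWithinAt.tendsto)
      filter_upwards [self_mem_nhdsWithin] with v hv
      exact (hgood v hv).symm
    exact tendsto_nhds_unique h1 h2

theorem traceForm (K : ℕ) (w w' : ℂ) (hww : w * w' = 1) (d' : Fin K → ℂ) :
    Matrix.trace (Um K w * Matrix.diagonal d' * (Um K w')ᵀ) = (K : ℂ) * ∑ k, d' k := by
  rw [Matrix.trace]
  have hdiag : ∀ i : Fin K, (Um K w * Matrix.diagonal d' * (Um K w')ᵀ).diag i = ∑ k, d' k := by
    intro i
    rw [Matrix.diag_apply, Matrix.mul_apply]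
    refine Finset.sum_congr rfl fun k _ => ?_
    rw [Matrix.mul_diagonal, Matrix.transpose_apply]
    simp only [Um, of_apply]
    split_ifs
    · ring
    · linear_combination d' k * hww
  rw [Finset.sum_congr rfl (fun i _ => hdiag i), Finset.sum_const, Finset.card_univ,
    Fintype.card_fin, nsmul_eq_mul]

theorem myFactorization (K : ℕ) (hK : 3 ≤ K) (κ : ℕ → ℝ) (hκ : κ 0 = κ K)
    (z : ℂ) (hz : z ≠ 0) :
    -(diffMatrix K κ z) = (1 - (Tm K (z⁻¹ ^ K))ᵀ) *
      (Matrix.diagonal (fun i : Fin K => (κ ((i : ℕ) + 1) : ℂ)) * (1 - Tm K (z ^ K))) := by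
  have hzz : z⁻¹ ^ K * z ^ K = 1 := by
    rw [← mul_pow, inv_mul_cancel₀ hz, one_pow]
  set Y : Matrix (Fin K) (Fin K) ℂ :=
    Matrix.diagonal (fun i : Fin K => (κ ((i : ℕ) + 1) : ℂ)) * (1 - Tm K (z ^ K)) with hY
  have hYe : ∀ k j : Fin K, Y k j = (κ ((k : ℕ) + 1) : ℂ) *
      ((if (k : ℕ) = (j : ℕ) then 1 else 0) - Tm K (z ^ K) k j) := by
    intro k j
    rw [hY, Matrix.diagonal_mul, Matrix.sub_apply, Matrix.one_apply]
    congr 2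
    simp [Fin.ext_iff]
  ext i j
  have hi' := i.isLt
  have hj' := j.isLt
  rw [Matrix.sub_mul, Matrix.one_mul, Matrix.sub_apply, Matrix.mul_apply]
  by_cases hi0 : (i : ℕ) = 0
  · have hsum : ∑ k, (Tm K (z⁻¹ ^ K))ᵀ i k * Y k j = z⁻¹ ^ K * Y ⟨K - 1, by omega⟩ j := by
      rw [Finset.sum_eq_single_of_mem (⟨K - 1, by omega⟩ : Fin K) (Finset.mem_univ _) (by
        intro b _ hb
        have hb' := b.isLt
        have hbv : (b : ℕ) ≠ K - 1 := fun h => hb (Fin.ext h)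
        rw [Matrix.transpose_apply]
        simp only [Tm, of_apply]
        split_ifs <;> first | omega | (rw [zero_mul]))]
      rw [Matrix.transpose_apply]
      simp only [Tm, of_apply]
      split_ifs <;> (try simp only [true_and, and_true] at *) <;> first | rfl | omega | (exfalso; omega)
    rw [hsum]
    simp only [hYe, Tm, diffMatrix, of_apply, Matrix.one_apply, Matrix.neg_apply, Fin.ext_iff]
    rw [hi0, hκ, show K - 1 + 1 = K from by omega]
    split_ifs <;> (try simp only [true_and, and_true] at *) <;>
      first
        | omega
        | ring1
        | (exfalso; omega)
        | (exact (‹False›).elim)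
        | linear_combination ((κ K : ℂ)) * hzz
        | linear_combination (-(κ K : ℂ)) * hzz
  · have hsum : ∑ k, (Tm K (z⁻¹ ^ K))ᵀ i k * Y k j = Y ⟨(i : ℕ) - 1, by omega⟩ j := by
      rw [Finset.sum_eq_single_of_mem (⟨(i : ℕ) - 1, by omega⟩ : Fin K) (Finset.mem_univ _) (by
        intro b _ hb
        have hb' := b.isLt
        have hbv : (b : ℕ) ≠ (i : ℕ) - 1 := fun h => hb (Fin.ext h)
        rw [Matrix.transpose_apply]
        simp only [Tm, of_apply]
        split_ifs <;> first | omega | (rw [zero_mul]))]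
      rw [Matrix.transpose_apply]
      simp only [Tm, of_apply]
      split_ifs <;> (try simp only [true_and, and_true] at *) <;> first | (rw [one_mul]) | omega | (exfalso; omega)
    rw [hsum]
    simp only [hYe, Tm, diffMatrix, of_apply, Matrix.one_apply, Matrix.neg_apply, Fin.ext_iff]
    rw [show (i : ℕ) - 1 + 1 = (i : ℕ) from by omega]
    split_ifs <;> (try simp only [true_and, and_true] at *) <;>
      first
        | omega
        | ring1
        | (exfalso; omega)
        | (exact (‹False›).elim)
        | (rw [‹(j : ℕ) + 1 = (i : ℕ)›]; ring1)
        | (rw [(‹(i : ℕ) = K - 1 ∧ (j : ℕ) = 0›).1, show K - 1 + 1 = K from by omega]; ring1)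


/-- For every integer `K ≥ 3`, all real `κ_1,…,κ_K` (with `κ_0 = κ_K`) and every nonzero
complex `z`, the coefficient of `λ^1` in `det(λI − M(z))` is
`c_1 = K ∑_{j=1}^K ∏_{i ≠ j} κ_i`.  In particular, when all `κ_i > 0` this equals
`K² κ_g^K / κ`, where `κ_g = (∏_{i=1}^K κ_i)^{1/K}` is the geometric mean and
`κ = K (∑_{i=1}^K 1/κ_i)⁻¹` is the harmonic mean of the diffusivities. -/
theorem stmt2 (K : ℕ) (hK : 3 ≤ K) (κ : ℕ → ℝ) (hκ : κ 0 = κ K)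
    (z : ℂ) (hz : z ≠ 0) :
    (diffMatrix K κ z).charpoly.coeff 1
        = (K : ℂ) * ∑ j ∈ Finset.range K,
            ∏ i ∈ (Finset.range K).erase j, (κ (i + 1) : ℂ)
    ∧ ((∀ i ∈ Finset.range K, 0 < κ (i + 1)) →
        (diffMatrix K κ z).charpoly.coeff 1
          = (((K : ℝ) ^ 2 *
                ((∏ i ∈ Finset.range K, κ (i + 1)) ^ ((1 : ℝ) / K)) ^ K /
                ((K : ℝ) * (∑ i ∈ Finset.range K, (κ (i + 1))⁻¹)⁻¹) : ℝ) : ℂ)) := by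
  have hK2 : 2 ≤ K := by omega
  have hww : z ^ K * z⁻¹ ^ K = 1 := by
    rw [← mul_pow, mul_inv_cancel₀ hz, one_pow]
  have himgv : ((univ : Finset (Fin K))).image Fin.val = Finset.range K := by
    ext m
    simp only [Finset.mem_image, Finset.mem_range, Finset.mem_univ, true_and]
    constructor
    · rintro ⟨i, rfl⟩; exact i.isLt
    · intro h; exact ⟨⟨m, h⟩, rfl⟩
  have himg : ∀ k : Fin K, (∏ j ∈ univ.erase k, (κ ((j : ℕ) + 1) : ℂ))
      = ∏ m ∈ (Finset.range K).erase (k : ℕ), (κ (m + 1) : ℂ) := by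
    intro k
    rw [← himgv, ← Finset.image_erase Fin.val_injective,
      Finset.prod_image (fun x _ y _ h => Fin.val_injective h)]
  have hmain : (diffMatrix K κ z).charpoly.coeff 1
      = (K : ℂ) * ∑ j ∈ Finset.range K,
          ∏ i ∈ (Finset.range K).erase j, (κ (i + 1) : ℂ) := by
    rw [coeff_one_charpoly, myFactorization K hK κ hκ z hz,
      Matrix.adjugate_mul_distrib, Matrix.adjugate_mul_distrib,
      show (1 : Matrix (Fin K) (Fin K) ℂ) - (Tm K (z⁻¹ ^ K))ᵀ = (1 - Tm K (z⁻¹ ^ K))ᵀ from by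
        rw [Matrix.transpose_sub, Matrix.transpose_one],
      ← Matrix.adjugate_transpose, adjT K hK2, adjT K hK2, Matrix.adjugate_diagonal,
      traceForm K _ _ hww]
    congr 1
    rw [Finset.sum_congr rfl (fun k _ => himg k),
      Fin.sum_univ_eq_sum_range (fun m => ∏ i ∈ (Finset.range K).erase m, (κ (i + 1) : ℂ)) K]
  refine ⟨hmain, fun hpos => ?_⟩
  have hP : 0 < ∏ i ∈ Finset.range K, κ (i + 1) := Finset.prod_pos hpos
  have hS : 0 < ∑ i ∈ Finset.range K, (κ (i + 1))⁻¹ :=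
    Finset.sum_pos (fun i hi => inv_pos.mpr (hpos i hi))
      (Finset.nonempty_range_iff.mpr (by omega))
  have hKR : (K : ℝ) ≠ 0 := Nat.cast_ne_zero.mpr (by omega)
  have hpow : ((∏ i ∈ Finset.range K, κ (i + 1)) ^ ((1 : ℝ) / K)) ^ K
      = ∏ i ∈ Finset.range K, κ (i + 1) := by
    rw [← Real.rpow_natCast _ K, ← Real.rpow_mul hP.le, one_div,
      inv_mul_cancel₀ hKR, Real.rpow_one]
  have hsum : ∑ j ∈ Finset.range K, ∏ i ∈ (Finset.range K).erase j, κ (i + 1)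
      = (∏ i ∈ Finset.range K, κ (i + 1)) * ∑ i ∈ Finset.range K, (κ (i + 1))⁻¹ := by
    rw [Finset.mul_sum]
    refine Finset.sum_congr rfl fun j hj => ?_
    have hj0 : κ (j + 1) ≠ 0 := ne_of_gt (hpos j hj)
    rw [← Finset.prod_erase_mul (Finset.range K) _ hj]
    field_simp
  have hreal : ((K : ℝ) ^ 2 *
        ((∏ i ∈ Finset.range K, κ (i + 1)) ^ ((1 : ℝ) / K)) ^ K /
        ((K : ℝ) * (∑ i ∈ Finset.range K, (κ (i + 1))⁻¹)⁻¹))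
      = (K : ℝ) * ∑ j ∈ Finset.range K, ∏ i ∈ (Finset.range K).erase j, κ (i + 1) := by
    rw [hpow, hsum]
    field_simp
  rw [hmain, hreal]
  push_cast
  rfl
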